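/- For a binary matroid M and ℓ ≥ 4, M is ℓ-chordal if and only if the Orlik–Solomon algebra OS(M) is (ℓ−2)-adic, i.e., ℑ(𝔠) = ℑ(𝔠_{ℓ−1}). -/

import Mathlib

open ExteriorAlgebra

/-- The Grassmann algebra over `K` on generators `e 0, ..., e (n-1)`. -/
abbrev Grass (K : Type) [Field K] (n : ℕ) := ExteriorAlgebra K (Fin n → K)

/-- The generator `e i`. -/
noncomputable def gen (K : Type) [Field K] (n : ℕ) (i : Fin n) : Grass K n :=
  ExteriorAlgebra.ι K (Pi.single i 1)

/-- The monomial associated to a list of indices. -/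
noncomputable def monList (K : Type) [Field K] (n : ℕ) (l : List (Fin n)) : Grass K n :=
  (l.map (gen K n)).prod

/-- The monomial `e_X` of a subset `X ⊆ [n]`, factors in increasing order. -/
noncomputable def mon (K : Type) [Field K] (n : ℕ) (X : Finset (Fin n)) : Grass K n :=
  monList K n (X.sort (· ≤ ·))

/-- The degree `-1` antiderivation `∂` on the Grassmann algebra with `∂ (e i) = 1`
(left contraction with the covector sending each generator to `1`). -/
noncomputable def bd (K : Type) [Field K] (n : ℕ) : Grass K n →ₗ[K] Grass K n :=
  CliffordAlgebra.contractLeft (∑ i : Fin n, LinearMap.proj i)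

/-- The two-sided ideal `ℑ(𝔛)` generated by the differentials `∂ e_Y`, `Y ∈ 𝔛`. -/
noncomputable def OSIdeal (K : Type) [Field K] (n : ℕ) (X : Set (Finset (Fin n))) :
    TwoSidedIdeal (Grass K n) :=
  TwoSidedIdeal.span ((fun Y => bd K n (mon K n Y)) '' X)

/-- A circuit of a matroid: a minimal dependent (finite) set. -/
def IsCircuit {α : Type} [DecidableEq α] (M : Matroid α) (C : Finset α) : Prop :=
  M.Dep (C : Set α) ∧ ∀ D : Finset α, D ⊂ C → ¬ M.Dep (D : Set α)

/-- `i` is a chord of the circuit `C`, witnessed by circuits `C₁, C₂` with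
`C₁ ∩ C₂ = {i}` and `C = C₁ Δ C₂`. -/
def IsChord {α : Type} [DecidableEq α] (M : Matroid α) (C : Finset α) (i : α) : Prop :=
  ∃ C₁ C₂ : Finset α, IsCircuit M C₁ ∧ IsCircuit M C₂ ∧ C₁ ∩ C₂ = {i} ∧ C = symmDiff C₁ C₂

def HasChord {α : Type} [DecidableEq α] (M : Matroid α) (C : Finset α) : Prop :=
  ∃ i, IsChord M C i

/-- `M` is `ℓ`-chordal: every circuit with at least `ℓ` elements has a chord. -/
def Chordal {α : Type} [DecidableEq α] (M : Matroid α) (l : ℕ) : Prop :=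
  ∀ C : Finset α, IsCircuit M C → l ≤ C.card → HasChord M C

/-- `M` is simple: every circuit has at least 3 elements. -/
def SimpleM {α : Type} [DecidableEq α] (M : Matroid α) : Prop :=
  ∀ C : Finset α, IsCircuit M C → 3 ≤ C.card

/-- `M` is binary: the symmetric difference of two distinct circuits contains a circuit. -/
def BinaryM {α : Type} [DecidableEq α] (M : Matroid α) : Prop :=
  ∀ C D : Finset α, IsCircuit M C → IsCircuit M D → C ≠ D →
    ∃ C', IsCircuit M C' ∧ C' ⊆ symmDiff C D

/-- The set `𝔠` of circuits of `M`. -/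
def Circuits {α : Type} [DecidableEq α] (M : Matroid α) : Set (Finset α) :=
  {C | IsCircuit M C}

/-- The set `𝔠_k` of circuits of `M` with at most `k` elements. -/
def CircuitsLe {α : Type} [DecidableEq α] (M : Matroid α) (k : ℕ) : Set (Finset α) :=
  {C | IsCircuit M C ∧ C.card ≤ k}

variable {K : Type} [Field K] {n : ℕ}

noncomputable def covec (K : Type) [Field K] (n : ℕ) : Module.Dual K (Fin n → K) :=
  ∑ i : Fin n, LinearMap.proj i

lemma bd_eq : bd K n = CliffordAlgebra.contractLeft (covec K n) := rfl

lemma covec_single (i : Fin n) : covec K n (Pi.single i (1:K)) = 1 := by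
  simp [covec, LinearMap.proj]

lemma bd_gen (i : Fin n) : bd K n (gen K n i) = 1 := by
  rw [bd_eq, gen, CliffordAlgebra.contractLeft_ι, covec_single, map_one]

lemma bd_gen_mul (i : Fin n) (x : Grass K n) :
    bd K n (gen K n i * x) = x - gen K n i * bd K n x := by
  rw [bd_eq, gen, CliffordAlgebra.contractLeft_ι_mul, covec_single, one_smul]

lemma bd_one : bd K n 1 = 0 := CliffordAlgebra.contractLeft_one _ _

lemma bd_mul (x y : Grass K n) :
    bd K n (x * y) = bd K n x * y + CliffordAlgebra.involute x * bd K n y := by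
  induction x using CliffordAlgebra.induction generalizing y with
  | algebraMap r =>
      rw [bd_eq, CliffordAlgebra.contractLeft_algebraMap_mul, CliffordAlgebra.contractLeft_algebraMap,
        zero_mul, zero_add, AlgHom.commutes]
  | ι v =>
      rw [bd_eq, CliffordAlgebra.contractLeft_ι_mul, CliffordAlgebra.contractLeft_ι,
        CliffordAlgebra.involute_ι, ← bd_eq, Algebra.smul_def, neg_mul, sub_eq_add_neg]
  | mul a b ha hb =>
      rw [mul_assoc, ha, hb, ha b, map_mul]
      noncomm_ring
  | add a b ha hb =>
      rw [add_mul, map_add, map_add, map_add, ha, hb, add_mul, add_mul]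
      abel

/-- The fundamental sign-free identity underlying chordality. -/
lemma key_identity (i : Fin n) (a b : Grass K n) :
    bd K n (a * b) = bd K n a * bd K n (gen K n i * b)
      + bd K n (a * gen K n i) * bd K n b := by
  rw [bd_gen_mul, bd_mul a (gen K n i), bd_gen, bd_mul a b, mul_one]
  noncomm_ring

lemma monList_nil : monList K n [] = 1 := rfl

lemma monList_cons (j : Fin n) (t : List (Fin n)) :
    monList K n (j :: t) = gen K n j * monList K n t := by
  simp [monList]

lemma monList_append (l₁ l₂ : List (Fin n)) :
    monList K n (l₁ ++ l₂) = monList K n l₁ * monList K n l₂ := by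
  simp [monList]

lemma bd_monList_cons (j : Fin n) (t : List (Fin n)) :
    bd K n (monList K n (j :: t)) = monList K n t - gen K n j * bd K n (monList K n t) := by
  rw [monList_cons, bd_gen_mul]

lemma gen_sq (i : Fin n) : gen K n i * gen K n i = 0 := ι_sq_zero _

lemma gen_anticomm (i j : Fin n) : gen K n i * gen K n j = -(gen K n j * gen K n i) :=
  eq_neg_of_add_eq_zero_left (ι_add_mul_swap _ _)

lemma monList_perm {l l' : List (Fin n)} (h : l.Perm l') :
    monList K n l = monList K n l' ∨ monList K n l = - monList K n l' := by
  induction h with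
  | nil => exact Or.inl rfl
  | cons x h ih =>
      rcases ih with ih | ih
      · exact Or.inl (by rw [monList_cons, monList_cons, ih])
      · exact Or.inr (by rw [monList_cons, monList_cons, ih, mul_neg])
  | swap x y l =>
      refine Or.inr ?_
      rw [monList_cons, monList_cons, monList_cons, monList_cons, ← mul_assoc, ← mul_assoc,
        gen_anticomm y x, neg_mul]
  | trans h₁ h₂ ih₁ ih₂ =>
      rcases ih₁ with ih₁ | ih₁ <;> rcases ih₂ with ih₂ | ih₂
      · exact Or.inl (ih₁.trans ih₂)
      · exact Or.inr (ih₁.trans ih₂)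
      · exact Or.inr (by rw [ih₁, ih₂])
      · exact Or.inl (by rw [ih₁, ih₂, neg_neg])

/-- Contraction with the `j`-th coordinate functional. -/
noncomputable def ct (j : Fin n) : Grass K n →ₗ[K] Grass K n :=
  CliffordAlgebra.contractLeft (LinearMap.proj j)

lemma ct_gen_mul (j i : Fin n) (x : Grass K n) :
    ct j (gen K n i * x) = ((Pi.single i (1:K) : Fin n → K) j) • x - gen K n i * ct j x := by
  rw [ct, gen, CliffordAlgebra.contractLeft_ι_mul]
  rfl

lemma ct_monList_not_mem {j : Fin n} : ∀ {l : List (Fin n)}, j ∉ l →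
    ct j (monList K n l) = 0
  | [], _ => by
      rw [monList_nil, ct]
      exact CliffordAlgebra.contractLeft_one _ _
  | (a :: t), h => by
      rw [monList_cons, ct_gen_mul, ct_monList_not_mem (fun ht => h (List.mem_cons_of_mem a ht)),
        mul_zero, Pi.single_apply, if_neg (fun hij : j = a => h (hij ▸ (List.mem_cons_self : a ∈ a :: t))),
        zero_smul, sub_zero]

lemma ct_all : ∀ (l : List (Fin n)), l.Nodup →
    List.foldl (fun (x : Grass K n) j => ct j x) (monList K n l) l = 1
  | [], _ => rfl
  | (a :: t), h => by
      have h1 : a ∉ t := (List.nodup_cons.mp h).1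
      have h2 : t.Nodup := (List.nodup_cons.mp h).2
      rw [List.foldl_cons, monList_cons, ct_gen_mul, ct_monList_not_mem h1, mul_zero, sub_zero,
        Pi.single_apply, if_pos rfl, one_smul]
      exact ct_all t h2

lemma monList_ne_zero {l : List (Fin n)} (h : l.Nodup) : monList K n l ≠ 0 := by
  intro h0
  have := ct_all (K := K) l h
  rw [h0] at this
  have hz : ∀ (l' : List (Fin n)), List.foldl (fun (x : Grass K n) j => ct j x) 0 l' = 0 := by
    intro l'
    induction l' with
    | nil => rfl
    | cons a t ih => rw [List.foldl_cons, map_zero]; exact ih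
  rw [hz] at this
  exact one_ne_zero this.symm

lemma mon_eq_monList_sort (X : Finset (Fin n)) : mon K n X = monList K n (X.sort (· ≤ ·)) := rfl

/-- `mon X` agrees up to sign with `monList l` for any nodup enumeration `l` of `X`. -/
lemma mon_eq_pm_monList {X : Finset (Fin n)} {l : List (Fin n)} (hn : l.Nodup)
    (hX : l.toFinset = X) :
    mon K n X = monList K n l ∨ mon K n X = - monList K n l := by
  apply monList_perm
  apply List.perm_of_nodup_nodup_toFinset_eq (Finset.sort_nodup _ _) hn
  rw [Finset.sort_toFinset, hX]

lemma gen_mul_bd_mon {X : Finset (Fin n)} (hX : X.Nonempty) :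
    ∃ j ∈ X, gen K n j * bd K n (mon K n X) = mon K n X := by
  rcases hl : X.sort (· ≤ ·) with _ | ⟨j, t⟩
  · exfalso
    rw [← Finset.sort_toFinset (s := X) (r := (· ≤ ·)), hl] at hX
    simp at hX
  · refine ⟨j, ?_, ?_⟩
    · have : j ∈ X.sort (· ≤ ·) := by rw [hl]; exact List.mem_cons_self
      rwa [Finset.mem_sort] at this
    · rw [mon_eq_monList_sort, hl, bd_monList_cons, mul_sub, ← mul_assoc, gen_sq, zero_mul,
        sub_zero, monList_cons]

lemma bd_mon_ne_zero {X : Finset (Fin n)} (hX : X.Nonempty) : bd K n (mon K n X) ≠ 0 := by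
  obtain ⟨j, _, hj⟩ := gen_mul_bd_mon (K := K) hX
  intro h0
  rw [h0, mul_zero] at hj
  exact monList_ne_zero (Finset.sort_nodup _ _) hj.symm

section Projection

variable (C : Finset (Fin n))

/-- The projection onto coordinates in `C`. -/
noncomputable def projC : (Fin n → K) →ₗ[K] (Fin n → K) :=
  LinearMap.pi (fun j => if j ∈ C then LinearMap.proj j else 0)

/-- The algebra endomorphism killing the generators outside `C`. -/
noncomputable def phiC : Grass K n →ₐ[K] Grass K n :=
  ExteriorAlgebra.map (projC C)

lemma phiC_gen_mem {i : Fin n} (h : i ∈ C) : phiC (K := K) C (gen K n i) = gen K n i := by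
  rw [phiC, gen, ExteriorAlgebra.map_apply_ι]
  congr 1
  ext j
  simp only [projC, LinearMap.pi_apply]
  by_cases hj : j ∈ C
  · rw [if_pos hj]; rfl
  · rw [if_neg hj]
    have hji : j ≠ i := fun hji => hj (hji ▸ h)
    show (0 : (Fin n → K) →ₗ[K] K) _ = (Pi.single i (1:K) : Fin n → K) j
    rw [Pi.single_apply, if_neg hji, LinearMap.zero_apply]

lemma phiC_gen_not_mem {i : Fin n} (h : i ∉ C) : phiC (K := K) C (gen K n i) = 0 := by
  rw [phiC, gen, ExteriorAlgebra.map_apply_ι]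
  have : projC (K := K) C (Pi.single i 1) = 0 := by
    ext j
    simp only [projC, LinearMap.pi_apply]
    by_cases hj : j ∈ C
    · rw [if_pos hj]
      have hji : j ≠ i := fun hji => h (hji ▸ hj)
      show (Pi.single i (1:K) : Fin n → K) j = (0 : Fin n → K) j
      rw [Pi.single_apply, if_neg hji]
      rfl
    · rw [if_neg hj]; rfl
  rw [this, map_zero]

lemma phiC_monList_mem : ∀ {l : List (Fin n)}, (∀ j ∈ l, j ∈ C) →
    phiC (K := K) C (monList K n l) = monList K n l
  | [], _ => by rw [monList_nil, map_one]
  | (a :: t), h => by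
      rw [monList_cons, map_mul, phiC_gen_mem C (h a (List.mem_cons_self : a ∈ a :: t)),
        phiC_monList_mem (fun j hj => h j (List.mem_cons_of_mem a hj))]

lemma phiC_monList_zero : ∀ {l : List (Fin n)}, (∃ j ∈ l, j ∉ C) →
    phiC (K := K) C (monList K n l) = 0
  | (a :: t), h => by
      rw [monList_cons, map_mul]
      by_cases ha : a ∈ C
      · have : ∃ j ∈ t, j ∉ C := by
          obtain ⟨j, hj1, hj2⟩ := h
          rcases List.mem_cons.mp hj1 with rfl | hj1
          · exact absurd ha hj2
          · exact ⟨j, hj1, hj2⟩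
        rw [phiC_monList_zero this, mul_zero]
      · rw [phiC_gen_not_mem C ha, zero_mul]

lemma phiC_bd_monList_mem : ∀ {l : List (Fin n)}, (∀ j ∈ l, j ∈ C) →
    phiC (K := K) C (bd K n (monList K n l)) = bd K n (monList K n l)
  | [], _ => by rw [monList_nil, bd_one, map_zero]
  | (a :: t), h => by
      rw [bd_monList_cons, map_sub, map_mul, phiC_gen_mem C (h a (List.mem_cons_self : a ∈ a :: t)),
        phiC_monList_mem C (fun j hj => h j (List.mem_cons_of_mem a hj)),
        phiC_bd_monList_mem (fun j hj => h j (List.mem_cons_of_mem a hj))]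

lemma phiC_bd_monList_zero : ∀ {l : List (Fin n)},
    2 ≤ (l.filter (fun j => j ∉ C)).length →
    phiC (K := K) C (bd K n (monList K n l)) = 0
  | [], h => by simp at h
  | (a :: t), h => by
      rw [bd_monList_cons, map_sub, map_mul]
      by_cases ha : a ∈ C
      · have ht : 2 ≤ (t.filter (fun j => j ∉ C)).length := by
          rwa [List.filter_cons, if_neg (by simpa using ha)] at h
        have ht1 : ∃ j ∈ t, j ∉ C := by
          obtain ⟨j, hj⟩ := List.exists_mem_of_length_pos
            (show 0 < (t.filter (fun j => j ∉ C)).length by omega)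
          have := List.mem_filter.mp hj
          exact ⟨j, this.1, by simpa using this.2⟩
        rw [phiC_monList_zero C ht1, phiC_bd_monList_zero ht, mul_zero, sub_zero]
      · have ht : 1 ≤ (t.filter (fun j => j ∉ C)).length := by
          rw [List.filter_cons, if_pos (by simpa using ha)] at h
          simpa using Nat.le_of_succ_le_succ h
        have ht1 : ∃ j ∈ t, j ∉ C := by
          obtain ⟨j, hj⟩ := List.exists_mem_of_length_pos
            (show 0 < (t.filter (fun j => j ∉ C)).length by omega)
          have := List.mem_filter.mp hj
          exact ⟨j, this.1, by simpa using this.2⟩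
        rw [phiC_monList_zero C ht1, phiC_gen_not_mem C ha, zero_mul, sub_zero]

end Projection


/-! ### Ideal lemmas -/

lemma mem_OSIdeal_of_mem {X : Set (Finset (Fin n))} {D : Finset (Fin n)} (h : D ∈ X) :
    bd K n (mon K n D) ∈ OSIdeal K n X :=
  TwoSidedIdeal.subset_span ⟨D, h, rfl⟩

lemma OSIdeal_mono {X Y : Set (Finset (Fin n))} (h : X ⊆ Y) :
    OSIdeal K n X ≤ OSIdeal K n Y :=
  TwoSidedIdeal.span_mono (Set.image_mono h)

lemma OSIdeal_le {X : Set (Finset (Fin n))} {I : TwoSidedIdeal (Grass K n)}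
    (h : ∀ Y ∈ X, bd K n (mon K n Y) ∈ I) : OSIdeal K n X ≤ I := by
  intro x hx
  refine TwoSidedIdeal.mem_span_iff.mp hx I ?_
  rintro _ ⟨Y, hY, rfl⟩
  exact h Y hY

lemma phi_kill {X : Set (Finset (Fin n))} (φ : Grass K n →ₐ[K] Grass K n)
    (h : ∀ Y ∈ X, φ (bd K n (mon K n Y)) = 0) {x : Grass K n} (hx : x ∈ OSIdeal K n X) :
    φ x = 0 := by
  refine (TwoSidedIdeal.mem_ker φ).mp ?_
  refine TwoSidedIdeal.mem_span_iff.mp hx (TwoSidedIdeal.ker φ) ?_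
  rintro _ ⟨Y, hY, rfl⟩
  exact (TwoSidedIdeal.mem_ker φ).mpr (h Y hY)

lemma bd_mem_of_pm {J : TwoSidedIdeal (Grass K n)} {x y : Grass K n}
    (h : x = y ∨ x = -y) (hm : bd K n x ∈ J) : bd K n y ∈ J := by
  rcases h with rfl | h
  · exact hm
  · have : bd K n x = - bd K n y := by rw [h, map_neg]
    rw [this] at hm
    simpa using J.neg_mem hm

/-! ### The decomposition attached to a chord -/

lemma chord_decomp {C C₁ C₂ : Finset (Fin n)} {i : Fin n}
    (h1 : C₁ ∩ C₂ = {i}) (hC : C = symmDiff C₁ C₂) :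
    i ∈ C₁ ∧ i ∈ C₂ ∧ Disjoint (C₁.erase i) (C₂.erase i) ∧
      C = C₁.erase i ∪ C₂.erase i ∧ i ∉ C := by
  have hmem : ∀ x, x ∈ C₁ → x ∈ C₂ → x = i := by
    intro x hx1 hx2
    have : x ∈ C₁ ∩ C₂ := Finset.mem_inter.mpr ⟨hx1, hx2⟩
    rw [h1] at this
    exact Finset.mem_singleton.mp this
  have hi : i ∈ C₁ ∩ C₂ := by rw [h1]; exact Finset.mem_singleton_self i
  have hi1 : i ∈ C₁ := (Finset.mem_inter.mp hi).1
  have hi2 : i ∈ C₂ := (Finset.mem_inter.mp hi).2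
  refine ⟨hi1, hi2, ?_, ?_, ?_⟩
  · rw [Finset.disjoint_left]
    intro a ha hb
    have ha' := Finset.mem_erase.mp ha
    have hb' := Finset.mem_erase.mp hb
    exact ha'.1 (hmem a ha'.2 hb'.2)
  · ext x
    rw [hC, Finset.mem_symmDiff, Finset.mem_union, Finset.mem_erase, Finset.mem_erase]
    constructor
    · rintro (⟨hx1, hx2⟩ | ⟨hx2, hx1⟩)
      · exact Or.inl ⟨fun hxi => hx2 (hxi ▸ hi2), hx1⟩
      · exact Or.inr ⟨fun hxi => hx1 (hxi ▸ hi1), hx2⟩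
    · rintro (⟨hxi, hx1⟩ | ⟨hxi, hx2⟩)
      · exact Or.inl ⟨hx1, fun hx2 => hxi (hmem x hx1 hx2)⟩
      · exact Or.inr ⟨hx2, fun hx1 => hxi (hmem x hx1 hx2)⟩
  · rw [hC, Finset.mem_symmDiff]
    rintro (⟨_, h⟩ | ⟨_, h⟩)
    · exact h hi2
    · exact h hi1

/-- The key algebraic step: if `C` has a chord decomposition `C = C₁ Δ C₂` with
`C₁ ∩ C₂ = {i}`, then `∂ e_C` lies in any two-sided ideal containing `∂ e_{C₁}`, `∂ e_{C₂}`. -/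
lemma bd_mon_mem_of_chord {C C₁ C₂ : Finset (Fin n)} {i : Fin n}
    (h1 : C₁ ∩ C₂ = {i}) (hC : C = symmDiff C₁ C₂) {J : TwoSidedIdeal (Grass K n)}
    (m1 : bd K n (mon K n C₁) ∈ J) (m2 : bd K n (mon K n C₂) ∈ J) :
    bd K n (mon K n C) ∈ J := by
  obtain ⟨hi1, hi2, hdisj, hunion, hiC⟩ := chord_decomp h1 hC
  set A := C₁.erase i with hA
  set B := C₂.erase i with hB
  set la := A.sort (· ≤ ·) with hla
  set lb := B.sort (· ≤ ·) with hlb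
  have hlaN : la.Nodup := Finset.sort_nodup _ _
  have hlbN : lb.Nodup := Finset.sort_nodup _ _
  have hlaF : la.toFinset = A := Finset.sort_toFinset _ _
  have hlbF : lb.toFinset = B := Finset.sort_toFinset _ _
  have hinotA : i ∉ la := by
    rw [hla, Finset.mem_sort]; exact Finset.notMem_erase i C₁
  have hinotB : i ∉ lb := by
    rw [hlb, Finset.mem_sort]; exact Finset.notMem_erase i C₂
  have hdisjl : ∀ x ∈ la, x ∉ lb := by
    intro x hx hx'
    rw [hla, Finset.mem_sort] at hx
    rw [hlb, Finset.mem_sort] at hx'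
    exact Finset.disjoint_left.mp hdisj hx hx'
  -- C₁ : la ++ [i]
  have h11 : (la ++ [i]).Nodup := by
    rw [List.nodup_append]
    refine ⟨hlaN, List.nodup_singleton i, ?_⟩
    intro a ha b hb hab
    rw [List.mem_singleton] at hb
    subst hb; subst hab; exact hinotA ha
  have h12 : (la ++ [i]).toFinset = C₁ := by
    rw [List.toFinset_append, hlaF]
    simp only [List.toFinset_cons, List.toFinset_nil, LawfulSingleton.insert_empty_eq]
    rw [Finset.union_comm]
    exact Finset.insert_erase hi1
  -- C₂ : i :: lb
  have h21 : (i :: lb).Nodup := List.nodup_cons.mpr ⟨hinotB, hlbN⟩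
  have h22 : (i :: lb).toFinset = C₂ := by
    rw [List.toFinset_cons, hlbF]
    exact Finset.insert_erase hi2
  -- C : la ++ lb
  have h31 : (la ++ lb).Nodup := by
    rw [List.nodup_append]
    exact ⟨hlaN, hlbN, fun a ha b hb hab => by subst hab; exact hdisjl a ha hb⟩
  have h32 : (la ++ lb).toFinset = C := by
    rw [List.toFinset_append, hlaF, hlbF, hunion]
  have e1 := mon_eq_pm_monList (K := K) h11 h12
  have e2 := mon_eq_pm_monList (K := K) h21 h22
  have e3 := mon_eq_pm_monList (K := K) h31 h32
  have j1 : bd K n (monList K n (la ++ [i])) ∈ J := bd_mem_of_pm (Or.inl rfl) (by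
    rcases e1 with e1 | e1
    · rwa [e1] at m1
    · rw [e1, map_neg] at m1; simpa using J.neg_mem m1)
  have j2 : bd K n (monList K n (i :: lb)) ∈ J := by
    rcases e2 with e2 | e2
    · rwa [e2] at m2
    · rw [e2, map_neg] at m2; simpa using J.neg_mem m2
  have hkey : bd K n (monList K n (la ++ lb)) =
      bd K n (monList K n la) * bd K n (monList K n (i :: lb))
        + bd K n (monList K n (la ++ [i])) * bd K n (monList K n lb) := by
    rw [monList_append, monList_cons, monList_append]
    have : monList K n [i] = gen K n i := by simp [monList]
    rw [this]
    exact key_identity i _ _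
  have hmem : bd K n (monList K n (la ++ lb)) ∈ J := by
    rw [hkey]
    exact J.add_mem (J.mul_mem_left _ _ j2) (J.mul_mem_right _ _ j1)
  rcases e3 with e3 | e3
  · rwa [e3]
  · rw [e3, map_neg]
    exact J.neg_mem hmem

/-! ### Matroid lemmas -/

variable {M : Matroid (Fin n)}

lemma circuit_nonempty {C : Finset (Fin n)} (hC : IsCircuit M C) : C.Nonempty := by
  have := hC.1.nonempty
  rwa [Finset.coe_nonempty] at this

lemma circuit_eq_of_subset {C D : Finset (Fin n)} (hD : IsCircuit M D) (hC : IsCircuit M C)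
    (h : D ⊆ C) : D = C := by
  by_contra hne
  exact hC.2 D (Finset.ssubset_iff_subset_ne.mpr ⟨h, hne⟩) hD.1

/-- In a simple binary matroid, a chordless circuit `C` is "far" from every other
circuit: `|D \ C| ≥ 2`. -/
lemma chordless_far (hb : BinaryM M) (hs : SimpleM M) {C : Finset (Fin n)}
    (hC : IsCircuit M C) (hno : ¬ HasChord M C) {D : Finset (Fin n)} (hD : IsCircuit M D)
    (hne : D ≠ C) : 2 ≤ (D \ C).card := by
  by_contra hcard
  interval_cases h : (D \ C).card
  · -- D ⊆ C
    have : D ⊆ C := Finset.sdiff_eq_empty_iff_subset.mp (Finset.card_eq_zero.mp h)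
    exact hne (circuit_eq_of_subset hD hC this)
  · -- D \ C = {a}
    obtain ⟨a, ha⟩ := Finset.card_eq_one.mp h
    have haD : a ∈ D := by
      have : a ∈ D \ C := ha ▸ Finset.mem_singleton_self a
      exact (Finset.mem_sdiff.mp this).1
    have haC : a ∉ C := by
      have : a ∈ D \ C := ha ▸ Finset.mem_singleton_self a
      exact (Finset.mem_sdiff.mp this).2
    have hDsub : ∀ x ∈ D, x ≠ a → x ∈ C := by
      intro x hx hxa
      by_contra hxC
      have : x ∈ D \ C := Finset.mem_sdiff.mpr ⟨hx, hxC⟩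
      rw [ha] at this
      exact hxa (Finset.mem_singleton.mp this)
    -- D ∩ C is nonempty
    have hDC : (D ∩ C).Nonempty := by
      by_contra hempty
      rw [Finset.not_nonempty_iff_eq_empty] at hempty
      have : D ⊆ {a} := by
        intro x hx
        by_contra hxa
        have hxC : x ∈ C := hDsub x hx (by simpa using hxa)
        have : x ∈ D ∩ C := Finset.mem_inter.mpr ⟨hx, hxC⟩
        rw [hempty] at this
        exact absurd this (Finset.notMem_empty x)
      have h3 := hs D hD
      have h4 := Finset.card_le_card this
      simp only [Finset.card_singleton] at h4
      omega
    obtain ⟨C'', hC'', hsub⟩ := hb C D hC hD (fun hEq => hne (hEq ▸ rfl))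
    have hCD : ∀ x ∈ C'', x ∈ C ∧ x ∉ D ∨ x = a := by
      intro x hx
      have := hsub hx
      rw [Finset.mem_symmDiff] at this
      rcases this with ⟨h1, h2⟩ | ⟨h1, h2⟩
      · exact Or.inl ⟨h1, h2⟩
      · right
        by_contra hxa
        exact h2 (hDsub x h1 hxa)
    have haC'' : a ∈ C'' := by
      by_contra haC''
      have hsubC : C'' ⊆ C := by
        intro x hx
        rcases hCD x hx with ⟨h1, _⟩ | rfl
        · exact h1
        · exact absurd hx haC''
      have := circuit_eq_of_subset hC'' hC hsubC
      subst this
      obtain ⟨x, hx⟩ := hDC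
      have hx' := Finset.mem_inter.mp hx
      rcases hCD x hx'.2 with ⟨_, h2⟩ | rfl
      · exact h2 hx'.1
      · exact haC hx'.2
    have hinter : D ∩ C'' = {a} := by
      ext x
      rw [Finset.mem_inter, Finset.mem_singleton]
      constructor
      · rintro ⟨hx1, hx2⟩
        rcases hCD x hx2 with ⟨_, h2⟩ | rfl
        · exact absurd hx1 h2
        · rfl
      · rintro rfl
        exact ⟨haD, haC''⟩
    have hneD : D ≠ C'' := by
      intro hEq
      obtain ⟨x, hx⟩ := hDC
      have hx' := Finset.mem_inter.mp hx
      have hxC'' : x ∈ C'' := hEq ▸ hx'.1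
      rcases hCD x hxC'' with ⟨_, h2⟩ | rfl
      · exact h2 hx'.1
      · exact haC hx'.2
    obtain ⟨E, hE, hEsub⟩ := hb D C'' hD hC'' hneD
    have hsubC : symmDiff D C'' ⊆ C := by
      intro x hx
      rw [Finset.mem_symmDiff] at hx
      rcases hx with ⟨h1, h2⟩ | ⟨h1, h2⟩
      · refine hDsub x h1 ?_
        intro hxa
        exact h2 (hxa ▸ haC'')
      · rcases hCD x h1 with ⟨hc, _⟩ | rfl
        · exact hc
        · exact absurd haD h2
    have hEC : E = C := circuit_eq_of_subset hE hC (hEsub.trans hsubC)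
    have hCeq : C = symmDiff D C'' := by
      refine subset_antisymm ?_ hsubC
      rw [← hEC]
      exact hEsub
    exact hno ⟨a, D, C'', hD, hC'', hinter, hCeq⟩

/-! ### Forward direction -/

lemma forward_mem {l : ℕ} (hs : SimpleM M) (hch : Chordal M l) (hl : 4 ≤ l) :
    ∀ (m : ℕ) (C : Finset (Fin n)), C.card ≤ m → IsCircuit M C →
      bd K n (mon K n C) ∈ OSIdeal K n (CircuitsLe M (l - 1)) := by
  intro m
  induction m with
  | zero =>
      intro C hc hC
      have := Finset.card_pos.mpr (circuit_nonempty hC)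
      omega
  | succ m ih =>
      intro C hc hC
      by_cases hcl : C.card ≤ l - 1
      · exact mem_OSIdeal_of_mem ⟨hC, hcl⟩
      · obtain ⟨i, C₁, C₂, hC1, hC2, h1, hCeq⟩ := hch C hC (by omega)
        obtain ⟨hi1, hi2, hdisj, hunion, hiC⟩ := chord_decomp h1 hCeq
        have hcard : C.card = (C₁.card - 1) + (C₂.card - 1) := by
          rw [hunion, Finset.card_union_of_disjoint hdisj, Finset.card_erase_of_mem hi1,
            Finset.card_erase_of_mem hi2]
        have h3a := hs C₁ hC1
        have h3b := hs C₂ hC2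
        exact bd_mon_mem_of_chord h1 hCeq (ih C₁ (by omega) hC1) (ih C₂ (by omega) hC2)

/-! ### Reverse direction -/

lemma reverse_chordal (K : Type) [Field K] {l : ℕ} (hb : BinaryM M) (hs : SimpleM M)
    (heq : OSIdeal K n (Circuits M) = OSIdeal K n (CircuitsLe M (l - 1))) (hl : 4 ≤ l) :
    Chordal M l := by
  intro C hC hlc
  by_contra hno
  have hker : ∀ Y ∈ CircuitsLe M (l - 1), phiC (K := K) C (bd K n (mon K n Y)) = 0 := by
    intro Y hY
    obtain ⟨hYc, hYcard⟩ := hY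
    have hYne : Y ≠ C := by
      intro hEq
      rw [hEq] at hYcard
      omega
    have h2 := chordless_far hb hs hC hno hYc hYne
    rw [mon_eq_monList_sort]
    apply phiC_bd_monList_zero
    have h6 : ((Y.sort (· ≤ ·)).filter (fun j => j ∉ C)).Nodup :=
      (Finset.sort_nodup _ _).filter _
    have h5 : ((Y.sort (· ≤ ·)).filter (fun j => j ∉ C)).toFinset = Y \ C := by
      rw [List.toFinset_filter, Finset.sort_toFinset, Finset.sdiff_eq_filter]
      apply Finset.filter_congr
      intro x _
      simp
    rw [← List.toFinset_card_of_nodup h6, h5]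
    exact h2
  have hmem : bd K n (mon K n C) ∈ OSIdeal K n (CircuitsLe M (l - 1)) := by
    rw [← heq]
    exact mem_OSIdeal_of_mem hC
  have h0 := phi_kill (phiC (K := K) C) hker hmem
  rw [mon_eq_monList_sort,
    phiC_bd_monList_mem C (fun j hj => (Finset.mem_sort _).mp hj)] at h0
  have hne : C.Nonempty := Finset.card_pos.mp (by omega)
  exact bd_mon_ne_zero (K := K) hne h0


/-- a binary matroid `M` is `ℓ`-chordal (`ℓ ≥ 4`) iff `OS(M)` is
`(ℓ-2)`-adic, i.e. `ℑ(𝔠) = ℑ(𝔠_{ℓ-1})`. -/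
theorem stmt11 (K : Type) [Field K] (n : ℕ) (M : Matroid (Fin n)) (hE : M.E = Set.univ)
    (hs : SimpleM M) (hb : BinaryM M) (l : ℕ) (hl : 4 ≤ l) :
    Chordal M l ↔ OSIdeal K n (Circuits M) = OSIdeal K n (CircuitsLe M (l - 1)) := by
  constructor
  · intro hch
    refine le_antisymm ?_ (OSIdeal_mono (fun D hD => hD.1))
    refine OSIdeal_le ?_
    intro Y hY
    exact forward_mem hs hch hl Y.card Y le_rfl hY
  · intro heq
    exact reverse_chordal K hb hs heq hl
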